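/- For integers n ≥ 1 and a sequence (a_j) of complex numbers, if f(z) = −Σ_{j=1}^∞ ((−1)^j/j) a_j (z/(1−z)^2)^j converges on a neighborhood of 0, then the n-th Taylor coefficient of z f'(z) (equivalently, n times the n-th Taylor coefficient of f) equals −n Σ_{j=1}^n ((−1)^j/j) C(n+j−1, 2j−1) a_j. -/

import Mathlib

open Finset

lemma hasSum_choose_aux {K : Type*} [RCLike K] (j : ℕ) {z : K} (hz : ‖z‖ < 1) :
    HasSum (fun m : ℕ => ((m + j).choose (2 * j + 1) : K) * z ^ m)
      ((z / (1 - z) ^ 2) ^ (j + 1)) := by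
  have h := (hasSum_choose_mul_geometric_of_norm_lt_one (2 * j + 1) hz).mul_left (z ^ (j + 1))
  have hinj : Function.Injective (fun n : ℕ => n + (j + 1)) := fun a b hab => by
    simpa using hab
  have hz0 : ∀ m : ℕ, m ∉ Set.range (fun n : ℕ => n + (j + 1)) →
      ((m + j).choose (2 * j + 1) : K) * z ^ m = 0 := by
    intro m hm
    have hmlt : m < j + 1 := by
      by_contra h'
      exact hm ⟨m - (j + 1), show m - (j + 1) + (j + 1) = m by omega⟩
    rw [Nat.choose_eq_zero_of_lt (by omega)]
    simp
  have hcomp : (fun n : ℕ => z ^ (j + 1) * (((n + (2 * j + 1)).choose (2 * j + 1) : K) * z ^ n))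
      = (fun m : ℕ => ((m + j).choose (2 * j + 1) : K) * z ^ m) ∘ (fun n : ℕ => n + (j + 1)) := by
    funext n
    simp only [Function.comp_apply]
    rw [show n + (j + 1) + j = n + (2 * j + 1) from by omega, pow_add]
    ring
  have hval : z ^ (j + 1) * (1 / (1 - z) ^ (2 * j + 1 + 1)) = (z / (1 - z) ^ 2) ^ (j + 1) := by
    rw [div_pow, ← pow_mul, mul_one_div, show 2 * (j + 1) = 2 * j + 1 + 1 from by ring]
  rw [hcomp] at h
  rw [← hval]
  exact (hinj.hasSum_iff hz0).mp h

lemma hasFPowerSeriesOnBall_ofScalars {e : ℕ → ℂ} {f : ℂ → ℂ} (ρ : NNReal) (hρ : 0 < ρ)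
    (h : ∀ z : ℂ, ‖z‖ < ρ → HasSum (fun m : ℕ => e m * z ^ m) (f z)) :
    HasFPowerSeriesOnBall f (FormalMultilinearSeries.ofScalars ℂ e) 0 ρ := by
  constructor
  · apply ENNReal.le_of_forall_nnreal_lt
    intro t ht
    rw [ENNReal.coe_lt_coe] at ht
    apply FormalMultilinearSeries.le_radius_of_summable
    have hsum : Summable (fun m : ℕ => e m * (t : ℂ) ^ m) :=
      (h (t : ℂ) (by simpa using ht)).summable
    have hnorm := summable_norm_iff.mpr hsum
    apply hnorm.of_nonneg_of_le
    · intro m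
      positivity
    · intro m
      have hmk : ‖ContinuousMultilinearMap.mkPiAlgebraFin ℂ m ℂ‖ = 1 :=
        ContinuousMultilinearMap.norm_mkPiAlgebraFin
      rw [FormalMultilinearSeries.ofScalars_norm_eq_mul, hmk, mul_one, norm_mul, norm_pow,
        show ‖((t : NNReal) : ℂ)‖ = (t : ℝ) by simp]
  · exact_mod_cast hρ
  · intro y hy
    rw [mem_emetric_ball_zero_iff, enorm_eq_nnnorm, ENNReal.coe_lt_coe, ← NNReal.coe_lt_coe, coe_nnnorm] at hy
    have := h y hy
    simp only [zero_add]
    refine this.congr_fun fun m => ?_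
    rw [FormalMultilinearSeries.ofScalars_apply_eq, smul_eq_mul]

theorem taylor_coefficient_formula (n : ℕ) (hn : 1 ≤ n) (a : ℕ → ℂ)
    (f : ℂ → ℂ) (r : ℝ) (hr : 0 < r)
    (hf : ∀ z : ℂ, ‖z‖ < r →
      HasSum (fun j : ℕ =>
          -((-1 : ℂ) ^ (j + 1) / (j + 1)) * a (j + 1) * (z / (1 - z) ^ 2) ^ (j + 1)) (f z))
    (c : ℕ → ℂ)
    (hc : ∀ z : ℂ, ‖z‖ < r → HasSum (fun m : ℕ => c m * z ^ m) (f z)) :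
    (n : ℂ) * c n =
      -(n : ℂ) * ∑ j ∈ Finset.Icc 1 n,
        ((-1 : ℂ) ^ j / j) * (Nat.choose (n + j - 1) (2 * j - 1) : ℂ) * a j := by
  set d : ℕ → ℂ := fun m => ∑ j ∈ Finset.Icc 1 m,
      ((-1 : ℂ) ^ j / j) * (Nat.choose (m + j - 1) (2 * j - 1) : ℂ) * a j with hd
  suffices hcd : c n = -(d n) by rw [hcd]; ring
  set ρr : ℝ := min r 1 / 2 with hρr
  have hρr0 : 0 < ρr := by positivity
  have hρrr : ρr < r := by
    rw [hρr]
    rcases min_cases r 1 with ⟨h1, _⟩ | ⟨h1, h2⟩ <;> rw [h1] <;> linarith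
  have hρr1 : ρr < 1 := by
    rw [hρr]
    rcases min_cases r 1 with ⟨h1, h2⟩ | ⟨h1, _⟩ <;> rw [h1] <;> linarith
  set coef : ℕ → ℂ := fun j => -((-1 : ℂ) ^ (j + 1) / (j + 1)) * a (j + 1) with hcoef
  have key : ∀ z : ℂ, ‖z‖ < ρr → HasSum (fun m : ℕ => -(d m) * z ^ m) (f z) := by
    intro z hz
    have hz1 : ‖z‖ < 1 := hz.trans hρr1
    set t : ℝ := ‖z‖ with ht
    have ht0 : 0 ≤ t := norm_nonneg z
    have h1 : HasSum (fun j : ℕ => coef j * (z / (1 - z) ^ 2) ^ (j + 1)) (f z) := by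
      have := hf z (by exact hz.trans hρrr)
      exact this
    have h2 : ∀ j : ℕ, HasSum
        (fun m : ℕ => coef j * (((m + j).choose (2 * j + 1) : ℂ) * z ^ m))
        (coef j * (z / (1 - z) ^ 2) ^ (j + 1)) :=
      fun j => (hasSum_choose_aux j hz1).mul_left _
    have hreal : ∀ j : ℕ, HasSum (fun m : ℕ => (((m + j).choose (2 * j + 1) : ℝ)) * t ^ m)
        ((t / (1 - t) ^ 2) ^ (j + 1)) :=
      fun j => hasSum_choose_aux j (by rwa [Real.norm_eq_abs, abs_of_nonneg ht0])
    have hw : ‖(t : ℂ) / (1 - (t : ℂ)) ^ 2‖ = t / (1 - t) ^ 2 := by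
      have heq : (t : ℂ) / (1 - (t : ℂ)) ^ 2 = ((t / (1 - t) ^ 2 : ℝ) : ℂ) := by push_cast; ring
      rw [heq, Complex.norm_real, Real.norm_eq_abs, abs_of_nonneg]
      exact div_nonneg ht0 (sq_nonneg _)
    have hsum_j : Summable (fun j : ℕ => ‖coef j‖ * (t / (1 - t) ^ 2) ^ (j + 1)) := by
      have htr : ‖((t : ℂ))‖ < r := by
        rw [Complex.norm_real, Real.norm_eq_abs, abs_of_nonneg ht0]
        exact hz.trans hρrr
      have hs := (hf (t : ℂ) htr).summable
      have hns := summable_norm_iff.mpr hs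
      refine hns.congr fun j => ?_
      simp only [hcoef, norm_mul, norm_pow, hw]
    have hFsum : Summable (fun p : ℕ × ℕ =>
        coef p.1 * (((p.2 + p.1).choose (2 * p.1 + 1) : ℂ) * z ^ p.2)) := by
      rw [← summable_norm_iff]
      rw [summable_prod_of_nonneg (fun p => norm_nonneg _)]
      have hnormeq : ∀ j m : ℕ,
          ‖coef j * (((m + j).choose (2 * j + 1) : ℂ) * z ^ m)‖ =
          ‖coef j‖ * ((((m + j).choose (2 * j + 1) : ℝ)) * t ^ m) := by
        intro j m
        simp only [norm_mul, norm_pow, Complex.norm_natCast, ht]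
      constructor
      · intro j
        exact (((hreal j).summable).mul_left ‖coef j‖).congr fun m => (hnormeq j m).symm
      · have htsum : ∀ j : ℕ,
            (∑' m : ℕ, ‖coef j * (((m + j).choose (2 * j + 1) : ℂ) * z ^ m)‖)
            = ‖coef j‖ * (t / (1 - t) ^ 2) ^ (j + 1) := by
          intro j
          rw [← ((hreal j).mul_left ‖coef j‖).tsum_eq]
          exact tsum_congr fun m => hnormeq j m
        exact hsum_j.congr fun j => (htsum j).symm
    have hF : HasSum (fun p : ℕ × ℕ =>
        coef p.1 * (((p.2 + p.1).choose (2 * p.1 + 1) : ℂ) * z ^ p.2)) (f z) := by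
      have hhs := hFsum.hasSum
      have heq : (∑' p : ℕ × ℕ,
          coef p.1 * (((p.2 + p.1).choose (2 * p.1 + 1) : ℂ) * z ^ p.2)) = f z := by
        rw [Summable.tsum_prod' hFsum fun j => (h2 j).summable]
        rw [tsum_congr fun j => (h2 j).tsum_eq]
        exact h1.tsum_eq
      rwa [heq] at hhs
    have hswap : HasSum (fun p : ℕ × ℕ =>
        coef p.2 * (((p.1 + p.2).choose (2 * p.2 + 1) : ℂ) * z ^ p.1)) (f z) :=
      ((Equiv.prodComm ℕ ℕ).hasSum_iff).mpr hF
    refine hswap.prod_fiberwise fun m => ?_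
    have hz0 : ∀ j ∉ Finset.range m,
        coef j * (((m + j).choose (2 * j + 1) : ℂ) * z ^ m) = 0 := by
      intro j hj
      rw [Finset.mem_range, not_lt] at hj
      rw [Nat.choose_eq_zero_of_lt (by omega)]
      simp
    have hfin := hasSum_sum_of_ne_finset_zero (L := SummationFilter.unconditional ℕ) hz0
    have hsum_eq : (∑ j ∈ Finset.range m,
        coef j * (((m + j).choose (2 * j + 1) : ℂ) * z ^ m)) = -(d m) * z ^ m := by
      simp only [hd]
      rw [show Finset.Icc 1 m = Finset.Ico 1 (m + 1) from (Finset.Ico_add_one_right_eq_Icc 1 m).symm]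
      rw [Finset.sum_Ico_eq_sum_range]
      simp only [Nat.add_sub_cancel]
      rw [neg_mul, Finset.sum_mul, ← Finset.sum_neg_distrib]
      refine Finset.sum_congr rfl fun i _ => ?_
      rw [hcoef]
      rw [show m + (1 + i) - 1 = m + i from by omega, show 2 * (1 + i) - 1 = 2 * i + 1 from by omega,
        show 1 + i = i + 1 from by omega]
      push_cast
      ring
    rwa [hsum_eq] at hfin
  set ρn : NNReal := ⟨ρr, hρr0.le⟩ with hρn
  have hρn0 : 0 < ρn := by exact_mod_cast hρr0
  have hA : HasFPowerSeriesOnBall f (FormalMultilinearSeries.ofScalars ℂ c) 0 ρn :=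
    hasFPowerSeriesOnBall_ofScalars ρn hρn0 fun z hz =>
      hc z (by exact lt_trans hz hρrr)
  have hB : HasFPowerSeriesOnBall f (FormalMultilinearSeries.ofScalars ℂ (fun m => -(d m))) 0 ρn :=
    hasFPowerSeriesOnBall_ofScalars ρn hρn0 fun z hz => key z hz
  have heq := hA.hasFPowerSeriesAt.eq_formalMultilinearSeries hB.hasFPowerSeriesAt
  have := FormalMultilinearSeries.ofScalars_series_injective ℂ ℂ heq
  exact congrFun this n
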